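/- Squeeze law for statistical p-convergence: let (X, p, E) be a lattice-normed Riesz space and (xₙ), (yₙ), (zₙ) sequences in X with xₙ ≤ yₙ ≤ zₙ for all n. If xₙ and zₙ are both statistically p-convergent to x, then yₙ is statistically p-convergent to x. -/

import Mathlib

open scoped Classical

/-- `K ⊆ ℕ` has natural density `d`. -/
def HasDensity (K : Set ℕ) (d : ℝ) : Prop :=
  Filter.Tendsto
    (fun n => (((Finset.range n).filter (fun k => k ∈ K)).card : ℝ) / n)
    Filter.atTop (nhds d)

/-- Statistical p-convergence of a sequence `x` to `x₀` in a lattice-normed space `(X, p, E)`: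
there is a sequence `q` in `E`, decreasing along an index set `K` of density 1 with infimum `0`,
dominating `p (x n - x₀)` on `K`. -/
def StatPConv {X E : Type*} [AddCommGroup X] [AddCommGroup E] [Lattice E]
    (p : X → E) (x : ℕ → X) (x₀ : X) : Prop :=
  ∃ (q : ℕ → E) (K : Set ℕ), HasDensity K 1 ∧
    (∀ m ∈ K, ∀ n ∈ K, m ≤ n → q n ≤ q m) ∧
    IsGLB (q '' K) 0 ∧
    ∀ n ∈ K, p (x n - x₀) ≤ q n

lemma hasDensity_one_unbounded {K : Set ℕ} (h : HasDensity K 1) :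
    ∀ N : ℕ, ∃ n ∈ K, N ≤ n := by
  by_contra hc
  push_neg at hc
  obtain ⟨N, hN⟩ := hc
  have hb : ∀ n : ℕ, (((Finset.range n).filter (fun k => k ∈ K)).card : ℝ) / n
      ≤ (N : ℝ) / n := by
    intro n
    have hcard : ((Finset.range n).filter (fun k => k ∈ K)).card ≤ N := by
      have hsub : (Finset.range n).filter (fun k => k ∈ K) ⊆ Finset.range N := by
        intro k hk
        simp only [Finset.mem_filter] at hk
        exact Finset.mem_range.mpr (hN k hk.2)
      simpa using Finset.card_le_card hsub
    rw [div_eq_mul_inv, div_eq_mul_inv]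
    exact mul_le_mul_of_nonneg_right (by exact_mod_cast hcard)
      (inv_nonneg.mpr (Nat.cast_nonneg n))
  have h10 : (1 : ℝ) ≤ 0 :=
    le_of_tendsto_of_tendsto' h (tendsto_const_div_atTop_nhds_zero_nat (N : ℝ)) hb
  linarith

lemma hasDensity_one_inter {K1 K2 : Set ℕ} (h1 : HasDensity K1 1) (h2 : HasDensity K2 1) :
    HasDensity (K1 ∩ K2) 1 := by
  have lo : Filter.Tendsto
      (fun n : ℕ => (((Finset.range n).filter (fun k => k ∈ K1)).card : ℝ) / n
        + (((Finset.range n).filter (fun k => k ∈ K2)).card : ℝ) / n - 1)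
      Filter.atTop (nhds 1) := by
    have := (h1.add h2).sub (tendsto_const_nhds (x := (1:ℝ)))
    simpa using this
  refine tendsto_of_tendsto_of_tendsto_of_le_of_le' lo h1 ?_ ?_
  · filter_upwards [Filter.eventually_ge_atTop 1] with n hn
    have hnpos : (0 : ℝ) < n := by exact_mod_cast hn
    set F1 := (Finset.range n).filter (fun k => k ∈ K1) with hF1
    set F2 := (Finset.range n).filter (fun k => k ∈ K2) with hF2
    set FI := @Finset.filter ℕ (fun k => k ∈ K1 ∩ K2)
      (fun k => Classical.propDecidable _) (Finset.range n) with hFI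
    have hsub : F1 ∩ F2 ⊆ FI := by
      intro k hk
      simp only [hF1, hF2, hFI, Finset.mem_inter, Finset.mem_filter] at hk ⊢
      exact ⟨hk.1.1, hk.1.2, hk.2.2⟩
    have hun : (F1 ∪ F2).card ≤ n := by
      have : F1 ∪ F2 ⊆ Finset.range n := by
        intro k hk
        rcases Finset.mem_union.mp hk with h | h
        · exact (Finset.mem_filter.mp h).1
        · exact (Finset.mem_filter.mp h).1
      simpa using Finset.card_le_card this
    have hkey : (F1.card : ℝ) + F2.card ≤ FI.card + n := by
      have h1' := Finset.card_inter_add_card_union F1 F2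
      have h2' := Finset.card_le_card hsub
      have : F1.card + F2.card ≤ FI.card + n := by omega
      exact_mod_cast this
    rw [← add_div, div_sub_one hnpos.ne', div_le_div_iff₀ hnpos hnpos]
    nlinarith [Nat.cast_nonneg (α := ℝ) FI.card]
  · filter_upwards with n
    rw [div_eq_mul_inv, div_eq_mul_inv]
    refine mul_le_mul_of_nonneg_right ?_ (inv_nonneg.mpr (Nat.cast_nonneg n))
    have hsub : @Finset.filter ℕ (fun k => k ∈ K1 ∩ K2)
        (fun k => Classical.propDecidable _) (Finset.range n)
        ⊆ (Finset.range n).filter (fun k => k ∈ K1) := by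
      intro k hk
      simp only [Finset.mem_filter] at hk ⊢
      exact ⟨hk.1, hk.2.1⟩
    exact_mod_cast Finset.card_le_card hsub

/-- Squeeze law for statistical p-convergence in a lattice-normed Riesz space. -/
theorem statPConv_squeeze {X E : Type*} [AddCommGroup X] [Lattice X] [CovariantClass X X (· + ·) (· ≤ ·)] [Module ℝ X]
    [AddCommGroup E] [Lattice E] [CovariantClass E E (· + ·) (· ≤ ·)] [Module ℝ E]
    (p : X → E)
    (hp0 : ∀ v : X, 0 ≤ p v)
    (hpeq : ∀ v : X, p v = 0 ↔ v = 0)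
    (hpsmul : ∀ (c : ℝ) (v : X), p (c • v) = |c| • p v)
    (hptri : ∀ v w : X, p (v + w) ≤ p v + p w)
    (hpmono : ∀ v w : X, |v| ≤ |w| → p v ≤ p w)
    (x y z : ℕ → X) (a : X)
    (hord : ∀ n, x n ≤ y n ∧ y n ≤ z n)
    (hx : StatPConv p x a) (hz : StatPConv p z a) :
    StatPConv p y a := by
  obtain ⟨q1, K1, hd1, hdec1, hglb1, hb1⟩ := hx
  obtain ⟨q2, K2, hd2, hdec2, hglb2, hb2⟩ := hz
  have hdK : HasDensity (K1 ∩ K2) 1 := hasDensity_one_inter hd1 hd2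
  refine ⟨fun n => q1 n + q2 n, K1 ∩ K2, hdK, ?_, ?_, ?_⟩
  · intro m hm n hn hmn
    exact add_le_add (hdec1 m hm.1 n hn.1 hmn) (hdec2 m hm.2 n hn.2 hmn)
  · constructor
    · rintro b ⟨n, hn, rfl⟩
      have h1 : (0:E) ≤ q1 n := hglb1.1 ⟨n, hn.1, rfl⟩
      have h2 : (0:E) ≤ q2 n := hglb2.1 ⟨n, hn.2, rfl⟩
      simpa using add_le_add h1 h2
    · intro b hb
      have hbq2 : ∀ m ∈ K1 ∩ K2, b ≤ q2 m := by
        intro m hm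
        have hsub0 : b - q2 m ≤ 0 := by
          apply hglb1.2
          rintro e ⟨n', hn', rfl⟩
          obtain ⟨n, hn, hge⟩ := hasDensity_one_unbounded hdK (max m n')
          have h1 : q1 n ≤ q1 n' := hdec1 n' hn' n hn.1 (le_trans (le_max_right m n') hge)
          have h2 : q2 n ≤ q2 m := hdec2 m hm.2 n hn.2 (le_trans (le_max_left m n') hge)
          have hbn : b ≤ q1 n + q2 n := hb ⟨n, hn, rfl⟩
          exact sub_le_iff_le_add.mpr (le_trans hbn (add_le_add h1 h2))
        exact sub_nonpos.mp hsub0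
      apply hglb2.2
      rintro e ⟨m', hm', rfl⟩
      obtain ⟨m, hm, hge⟩ := hasDensity_one_unbounded hdK m'
      exact le_trans (hbq2 m hm) (hdec2 m' hm' m hm.2 hge)
  · intro n hn
    have habs : |y n - a| ≤ |x n - a| + |z n - a| := by
      rw [abs_le']
      constructor
      · calc y n - a ≤ z n - a := sub_le_sub_right (hord n).2 a
          _ ≤ |z n - a| := le_abs_self _
          _ ≤ |x n - a| + |z n - a| := le_add_of_nonneg_left (abs_nonneg _)
      · calc -(y n - a) ≤ -(x n - a) := neg_le_neg_iff.mpr (sub_le_sub_right (hord n).1 a)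
          _ ≤ |x n - a| := neg_le_abs _
          _ ≤ |x n - a| + |z n - a| := le_add_of_nonneg_right (abs_nonneg _)
    have hpabs : ∀ v : X, p |v| = p v := fun v =>
      le_antisymm (hpmono _ _ (by rw [abs_abs])) (hpmono _ _ (by rw [abs_abs]))
    calc p (y n - a) ≤ p (|x n - a| + |z n - a|) := by
          exact hpmono _ _ (habs.trans (le_abs_self _))
      _ ≤ p |x n - a| + p |z n - a| := hptri _ _
      _ = p (x n - a) + p (z n - a) := by rw [hpabs, hpabs]
      _ ≤ q1 n + q2 n := add_le_add (hb1 n hn.1) (hb2 n hn.2)
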